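/- (Generalized KdV equation.) Let 𝔙 be a regular vessel with d = 2 and generalized KdV parameters σ1 = I, σ2 = [[0,0],[1,0]], γ = [[γ11, γ12],[γ21, −γ11]] with γ12 ≠ 0, write H_0(x,t) = [[h11, h12],[h21, h22]], and assume the normalization h11 + h22 = 0 on Ω. Then on Ω the entry h12 satisfies the generalized KdV equation 4i·γ12·∂_t h12 = 4(γ11² + γ12·γ21)·∂_x h12 − 6(∂_x h12)² − ∂_{xxx} h12. -/

import Mathlib

noncomputable section

open ContinuousLinearMap

/-- The coefficient space `ℂ^d`. -/
abbrev Ed (d : ℕ) : Type := EuclideanSpace ℂ (Fin d)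

/-- A `d × d` complex matrix viewed as a continuous linear map on `ℂ^d`. -/
def m2c {d : ℕ} (σ : Matrix (Fin d) (Fin d) ℂ) : Ed d →L[ℂ] Ed d :=
  Matrix.toEuclideanCLM (𝕜 := ℂ) σ

/-- A continuous linear map on `ℂ^d` viewed as a `d × d` complex matrix. -/
def c2m {d : ℕ} (T : Ed d →L[ℂ] Ed d) : Matrix (Fin d) (Fin d) ℂ :=
  (Matrix.toEuclideanCLM (𝕜 := ℂ)).symm T

/-- Partial derivative in the first (space) variable. -/
def pdx {M : Type*} [NormedAddCommGroup M] [NormedSpace ℝ M]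
    (F : ℝ × ℝ → M) (p : ℝ × ℝ) : M :=
  deriv (fun x => F (x, p.2)) p.1

/-- Partial derivative in the second (time) variable. -/
def pdt {M : Type*} [NormedAddCommGroup M] [NormedSpace ℝ M]
    (F : ℝ × ℝ → M) (p : ℝ × ℝ) : M :=
  deriv (fun t => F (p.1, t)) p.2

/-- Entrywise partial derivative in `x` of a matrix-valued function. -/
def pdxM {d : ℕ} (F : ℝ × ℝ → Matrix (Fin d) (Fin d) ℂ) (p : ℝ × ℝ) :
    Matrix (Fin d) (Fin d) ℂ :=
  Matrix.of fun i j => pdx (fun q => F q i j) p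

/-- Entrywise partial derivative in `t` of a matrix-valued function. -/
def pdtM {d : ℕ} (F : ℝ × ℝ → Matrix (Fin d) (Fin d) ℂ) (p : ℝ × ℝ) :
    Matrix (Fin d) (Fin d) ℂ :=
  Matrix.of fun i j => pdt (fun q => F q i j) p

/-- A regular vessel with inner (Krein/Hilbert) space `K` and coefficient space `ℂ^d`. -/
structure Vessel (K : Type*) [NormedAddCommGroup K] [InnerProductSpace ℂ K]
    [CompleteSpace K] (d : ℕ) where
  Ω : Set (ℝ × ℝ)
  hΩ : IsOpen Ω
  A : K →L[ℂ] K
  Aζ : K →L[ℂ] K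
  B : ℝ × ℝ → Ed d →L[ℂ] K
  C : ℝ × ℝ → K →L[ℂ] Ed d
  X : ℝ × ℝ → K →L[ℂ] K
  /-- pointwise inverse of `X` -/
  Xi : ℝ × ℝ → K →L[ℂ] K
  σ1 : Matrix (Fin d) (Fin d) ℂ
  σ2 : Matrix (Fin d) (Fin d) ℂ
  γ : Matrix (Fin d) (Fin d) ℂ
  γs : ℝ × ℝ → Matrix (Fin d) (Fin d) ℂ
  hσ1 : IsUnit σ1
  smoothB : ContDiffOn ℝ 2 B Ω
  smoothC : ContDiffOn ℝ 2 C Ω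
  smoothX : ContDiffOn ℝ 2 X Ω
  hXinv : ∀ p ∈ Ω, X p ∘L Xi p = (1 : K →L[ℂ] K) ∧ Xi p ∘L X p = (1 : K →L[ℂ] K)
  eqBx : ∀ p ∈ Ω,
    pdx B p ∘L m2c σ1 + A ∘L B p ∘L m2c σ2 + B p ∘L m2c γ = 0
  eqBt : ∀ p ∈ Ω, pdt B p = Complex.I • (A ∘L pdx B p)
  eqCx : ∀ p ∈ Ω,
    m2c σ1 ∘L pdx C p + m2c σ2 ∘L C p ∘L Aζ - m2c γ ∘L C p = 0
  eqCt : ∀ p ∈ Ω, pdt C p = (-Complex.I) • (pdx C p ∘L Aζ)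
  eqXx : ∀ p ∈ Ω, pdx X p = B p ∘L m2c σ2 ∘L C p
  eqXt : ∀ p ∈ Ω, pdt X p =
    Complex.I • (A ∘L B p ∘L m2c σ2 ∘L C p) -
      Complex.I • (B p ∘L m2c σ2 ∘L C p ∘L Aζ) +
      Complex.I • (B p ∘L m2c γ ∘L C p)
  eqLyap : ∀ p ∈ Ω, A ∘L X p + X p ∘L Aζ + B p ∘L m2c σ1 ∘L C p = 0
  eqLink : ∀ p ∈ Ω, γs p =
    γ + σ2 * c2m (C p ∘L Xi p ∘L B p) * σ1 - σ1 * c2m (C p ∘L Xi p ∘L B p) * σ2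

/-- The `n`-th moment `H_n = C 𝕏⁻¹ Aⁿ B` of a vessel, as a `d × d` matrix. -/
def Vessel.H {K : Type*} [NormedAddCommGroup K] [InnerProductSpace ℂ K]
    [CompleteSpace K] {d : ℕ} (V : Vessel K d) (n : ℕ) (p : ℝ × ℝ) :
    Matrix (Fin d) (Fin d) ℂ :=
  c2m (V.C p ∘L V.Xi p ∘L (V.A ^ n) ∘L V.B p)


/-! ### Auxiliary material for the proof -/

section KdVAux

open ContinuousLinearMap

variable {E F G : Type*} [NormedAddCommGroup E] [NormedSpace ℂ E]
  [NormedAddCommGroup F] [NormedSpace ℂ F] [NormedAddCommGroup G] [NormedSpace ℂ G]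

private lemma isBBM_compR : IsBoundedBilinearMap ℝ
    (fun p : (F →L[ℂ] G) × (E →L[ℂ] F) => p.1.comp p.2) where
  add_left f g h := by ext; simp
  smul_left r f g := by ext; simp
  add_right f g h := by ext; simp
  smul_right r f g := by ext; simp
  bound := ⟨1, one_pos, fun f g => by simpa using f.opNorm_comp_le g⟩

private lemma HasDerivAt.clm_compC {c : ℝ → F →L[ℂ] G} {c' : F →L[ℂ] G}
    {d : ℝ → E →L[ℂ] F} {d' : E →L[ℂ] F} {x : ℝ}
    (hc : HasDerivAt c c' x) (hd : HasDerivAt d d' x) :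
    HasDerivAt (fun y => (c y).comp (d y)) (c'.comp (d x) + (c x).comp d') x := by
  have h := ((isBBM_compR (E := E) (F := F) (G := G)).hasFDerivAt
    (c x, d x)).comp_hasDerivAt x (HasDerivAt.prodMk hc hd)
  simpa [IsBoundedBilinearMap.deriv_apply, add_comm, Function.comp_def] using h

variable {M : Type*} [NormedAddCommGroup M] [NormedSpace ℝ M]

private lemma slicex {Φ : ℝ × ℝ → M} {Ω : Set (ℝ × ℝ)} (hΩ : IsOpen Ω) {n : WithTop ℕ∞}
    (hn : 1 ≤ n) (hsm : ContDiffOn ℝ n Φ Ω) {q : ℝ × ℝ} (hq : q ∈ Ω) :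
    HasDerivAt (fun x => Φ (x, q.2)) (pdx Φ q) q.1 := by
  have h1 : DifferentiableAt ℝ Φ q :=
    (hsm.contDiffAt (hΩ.mem_nhds hq)).differentiableAt (zero_lt_one.trans_le hn).ne'
  have h2 : DifferentiableAt ℝ (fun x : ℝ => Φ (x, q.2)) q.1 := by
    have := h1.comp q.1 (f := fun x : ℝ => (x, q.2))
      (DifferentiableAt.prodMk differentiableAt_id (differentiableAt_const _))
    simpa [Function.comp_def] using this
  exact h2.hasDerivAt

private lemma slicet {Φ : ℝ × ℝ → M} {Ω : Set (ℝ × ℝ)} (hΩ : IsOpen Ω) {n : WithTop ℕ∞}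
    (hn : 1 ≤ n) (hsm : ContDiffOn ℝ n Φ Ω) {q : ℝ × ℝ} (hq : q ∈ Ω) :
    HasDerivAt (fun t => Φ (q.1, t)) (pdt Φ q) q.2 := by
  have h1 : DifferentiableAt ℝ Φ q :=
    (hsm.contDiffAt (hΩ.mem_nhds hq)).differentiableAt (zero_lt_one.trans_le hn).ne'
  have h2 : DifferentiableAt ℝ (fun t : ℝ => Φ (q.1, t)) q.2 := by
    have := h1.comp q.2 (f := fun t : ℝ => (q.1, t))
      (DifferentiableAt.prodMk (differentiableAt_const _) differentiableAt_id)
    simpa [Function.comp_def] using this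
  exact h2.hasDerivAt

private lemma c2m_comp (S T : Ed 2 →L[ℂ] Ed 2) : c2m (S ∘L T) = c2m S * c2m T :=
  map_mul (Matrix.toEuclideanCLM (𝕜 := ℂ)).symm S T

private lemma c2m_add (S T : Ed 2 →L[ℂ] Ed 2) : c2m (S + T) = c2m S + c2m T :=
  map_add _ S T

private lemma c2m_sub (S T : Ed 2 →L[ℂ] Ed 2) : c2m (S - T) = c2m S - c2m T :=
  map_sub _ S T

private lemma c2m_smul (r : ℂ) (T : Ed 2 →L[ℂ] Ed 2) : c2m (r • T) = r • c2m T :=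
  map_smul _ r T

private lemma c2m_m2c (σ : Matrix (Fin 2) (Fin 2) ℂ) : c2m (m2c σ) = σ :=
  StarAlgEquiv.symm_apply_apply _ σ

private def entL (i j : Fin 2) : (Ed 2 →L[ℂ] Ed 2) →ₗ[ℂ] ℂ where
  toFun T := c2m T i j
  map_add' S T := by simp [c2m]
  map_smul' r T := by simp [c2m]

private def entCLM (i j : Fin 2) : (Ed 2 →L[ℂ] Ed 2) →L[ℂ] ℂ :=
  LinearMap.toContinuousLinearMap (entL i j)

private lemma hasDerivAt_ent {F : ℝ → Ed 2 →L[ℂ] Ed 2} {F' : Ed 2 →L[ℂ] Ed 2} {x : ℝ}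
    (h : HasDerivAt F F' x) (i j : Fin 2) :
    HasDerivAt (fun y => c2m (F y) i j) (c2m F' i j) x := by
  have := ((entCLM i j).restrictScalars ℝ).hasFDerivAt.comp_hasDerivAt x h
  exact this

end KdVAux

section KdVCore

open ContinuousLinearMap

variable {K : Type*} [NormedAddCommGroup K] [InnerProductSpace ℂ K] [CompleteSpace K]

private lemma vx1 (V : Vessel K 2) {q : ℝ × ℝ} (hq : q ∈ V.Ω) (u : K) :
    V.X q (V.Xi q u) = u := by
  have := ContinuousLinearMap.ext_iff.mp (V.hXinv q hq).1 u
  simpa using this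

private lemma vx2 (V : Vessel K 2) {q : ℝ × ℝ} (hq : q ∈ V.Ω) (u : K) :
    V.Xi q (V.X q u) = u := by
  have := ContinuousLinearMap.ext_iff.mp (V.hXinv q hq).2 u
  simpa using this

private lemma m2c_one : m2c (1 : Matrix (Fin 2) (Fin 2) ℂ) = 1 := map_one _

/-- Pointwise form of the Lyapunov equation: `Aζ (Xi w) = -Xi (A w) - Xi (B (C (Xi w)))`. -/
private lemma vaz (V : Vessel K 2) (hσ1 : V.σ1 = 1) {q : ℝ × ℝ} (hq : q ∈ V.Ω) (w : K) :
    V.Aζ (V.Xi q w) = -(V.Xi q (V.A w)) - V.Xi q (V.B q (V.C q (V.Xi q w))) := by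
  have h := V.eqLyap q hq
  rw [hσ1, m2c_one] at h
  have h0 := congrArg (fun T : K →L[ℂ] K => V.Xi q (T (V.Xi q w))) h
  simp only [ContinuousLinearMap.add_apply, ContinuousLinearMap.comp_apply,
    ContinuousLinearMap.zero_apply, ContinuousLinearMap.one_apply, map_add, map_zero] at h0
  rw [vx1 V hq, vx2 V hq] at h0
  have h1 : V.Aζ (V.Xi q w) -
      (-(V.Xi q (V.A w)) - V.Xi q (V.B q (V.C q (V.Xi q w)))) = 0 := by
    rw [← h0]; abel
  exact sub_eq_zero.mp h1

/-- The space-derivative equation for `C`, solved for `pdx C`. -/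
private lemma vpdxC (V : Vessel K 2) (hσ1 : V.σ1 = 1) {q : ℝ × ℝ} (hq : q ∈ V.Ω) :
    pdx V.C q = m2c V.γ ∘L V.C q - m2c V.σ2 ∘L (V.C q ∘L V.Aζ) := by
  have h := V.eqCx q hq
  rw [hσ1, m2c_one, ContinuousLinearMap.one_def, ContinuousLinearMap.id_comp] at h
  have h1 : pdx V.C q - (m2c V.γ ∘L V.C q - m2c V.σ2 ∘L (V.C q ∘L V.Aζ)) = 0 := by
    rw [← h]; abel
  exact sub_eq_zero.mp h1

/-- The space-derivative equation for `B`, solved for `pdx B`. -/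
private lemma vpdxB (V : Vessel K 2) (hσ1 : V.σ1 = 1) {q : ℝ × ℝ} (hq : q ∈ V.Ω) :
    pdx V.B q = -(V.A ∘L (V.B q ∘L m2c V.σ2)) - V.B q ∘L m2c V.γ := by
  have h := V.eqBx q hq
  rw [hσ1, m2c_one, ContinuousLinearMap.one_def, ContinuousLinearMap.comp_id] at h
  have h1 : pdx V.B q - (-(V.A ∘L (V.B q ∘L m2c V.σ2)) - V.B q ∘L m2c V.γ) = 0 := by
    rw [← h]; abel
  exact sub_eq_zero.mp h1

/-- The slice `x ↦ Xi (x, t)` is differentiable with the expected derivative. -/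
private lemma vXix (V : Vessel K 2) {q : ℝ × ℝ} (hq : q ∈ V.Ω) :
    HasDerivAt (fun x => V.Xi (x, q.2))
      (-(V.Xi q * pdx V.X q * V.Xi q)) q.1 := by
  have hXs : HasDerivAt (fun x => V.X (x, q.2)) (pdx V.X q) q.1 :=
    slicex V.hΩ one_le_two V.smoothX hq
  have hmemx : ∀ᶠ x in nhds q.1, (x, q.2) ∈ V.Ω := by
    have hc : Continuous (fun x : ℝ => (x, q.2)) := continuous_id.prodMk continuous_const
    have hU : V.Ω ∈ nhds (q.1, q.2) := V.hΩ.mem_nhds (by rwa [Prod.mk.eta])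
    exact Filter.eventually_of_mem (hc.continuousAt.preimage_mem_nhds hU) fun x hx => hx
  set u : (K →L[ℂ] K)ˣ :=
    ⟨V.X q, V.Xi q, (V.hXinv q hq).1, (V.hXinv q hq).2⟩ with hu
  have hXq : V.X (q.1, q.2) = (u : K →L[ℂ] K) := by rw [hu, Prod.mk.eta]
  have h1' := (hasFDerivAt_ringInverse (𝕜 := ℝ) (R := K →L[ℂ] K) u).comp_hasDerivAt q.1 hXs
  have h1 : HasDerivAt (fun x => Ring.inverse (V.X (x, q.2)))
      ((-mulLeftRight ℝ (K →L[ℂ] K) (↑u⁻¹) (↑u⁻¹)) (pdx V.X q)) q.1 := by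
    simpa [Function.comp_def] using h1' 
  have hev : (fun x => V.Xi (x, q.2)) =ᶠ[nhds q.1] fun x => Ring.inverse (V.X (x, q.2)) := by
    filter_upwards [hmemx] with x hx
    exact (Ring.inverse_unit
      ⟨V.X (x, q.2), V.Xi (x, q.2), (V.hXinv _ hx).1, (V.hXinv _ hx).2⟩).symm
  have h2 := h1.congr_of_eventuallyEq hev
  convert h2 using 1
  all_goals rfl


/-- The slice `t ↦ Xi (x, t)` is differentiable with the expected derivative. -/
private lemma vXit (V : Vessel K 2) {q : ℝ × ℝ} (hq : q ∈ V.Ω) :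
    HasDerivAt (fun t => V.Xi (q.1, t))
      (-(V.Xi q * pdt V.X q * V.Xi q)) q.2 := by
  have hXs : HasDerivAt (fun t => V.X (q.1, t)) (pdt V.X q) q.2 :=
    slicet V.hΩ one_le_two V.smoothX hq
  have hmemx : ∀ᶠ t in nhds q.2, (q.1, t) ∈ V.Ω := by
    have hc : Continuous (fun t : ℝ => (q.1, t)) := continuous_const.prodMk continuous_id
    have hU : V.Ω ∈ nhds (q.1, q.2) := V.hΩ.mem_nhds (by rwa [Prod.mk.eta])
    exact Filter.eventually_of_mem (hc.continuousAt.preimage_mem_nhds hU) fun x hx => hx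
  set u : (K →L[ℂ] K)ˣ :=
    ⟨V.X q, V.Xi q, (V.hXinv q hq).1, (V.hXinv q hq).2⟩ with hu
  have h1' := (hasFDerivAt_ringInverse (𝕜 := ℝ) (R := K →L[ℂ] K) u).comp_hasDerivAt q.2 hXs
  have h1 : HasDerivAt (fun t => Ring.inverse (V.X (q.1, t)))
      ((-mulLeftRight ℝ (K →L[ℂ] K) (↑u⁻¹) (↑u⁻¹)) (pdt V.X q)) q.2 := by
    simpa [Function.comp_def] using h1'
  have hev : (fun t => V.Xi (q.1, t)) =ᶠ[nhds q.2] fun t => Ring.inverse (V.X (q.1, t)) := by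
    filter_upwards [hmemx] with x hx
    exact (Ring.inverse_unit
      ⟨V.X (q.1, x), V.Xi (q.1, x), (V.hXinv _ hx).1, (V.hXinv _ hx).2⟩).symm
  have h2 := h1.congr_of_eventuallyEq hev
  convert h2 using 1
  all_goals rfl

set_option maxHeartbeats 2000000 in
/-- Space derivative of the zeroth-moment composite, in closed form. -/
private lemma vHx0 (V : Vessel K 2) (hσ1 : V.σ1 = 1) {q : ℝ × ℝ} (hq : q ∈ V.Ω) :
    HasDerivAt (fun x => V.C (x, q.2) ∘L V.Xi (x, q.2) ∘L V.B (x, q.2))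
      (m2c V.σ2 ∘L (V.C q ∘L V.Xi q ∘L V.A ∘L V.B q)
        - (V.C q ∘L V.Xi q ∘L V.A ∘L V.B q) ∘L m2c V.σ2
        + (m2c V.γ ∘L (V.C q ∘L V.Xi q ∘L V.B q)
            - (V.C q ∘L V.Xi q ∘L V.B q) ∘L m2c V.γ)
        + (m2c V.σ2 ∘L (V.C q ∘L V.Xi q ∘L V.B q)
            - (V.C q ∘L V.Xi q ∘L V.B q) ∘L m2c V.σ2)
            ∘L (V.C q ∘L V.Xi q ∘L V.B q)) q.1 := by
  have hBs : HasDerivAt (fun x => V.B (x, q.2)) (pdx V.B q) q.1 :=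
    slicex V.hΩ one_le_two V.smoothB hq
  have hCs : HasDerivAt (fun x => V.C (x, q.2)) (pdx V.C q) q.1 :=
    slicex V.hΩ one_le_two V.smoothC hq
  have hXis := vXix V hq
  rw [V.eqXx q hq] at hXis
  rw [vpdxC V hσ1 hq] at hCs
  rw [vpdxB V hσ1 hq] at hBs
  have hraw : HasDerivAt (fun x => V.C (x, q.2) ∘L V.Xi (x, q.2) ∘L V.B (x, q.2))
      ((m2c V.γ ∘L V.C q - m2c V.σ2 ∘L (V.C q ∘L V.Aζ)) ∘L (V.Xi q ∘L V.B q)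
        + V.C q ∘L ((-(V.Xi q * (V.B q ∘L m2c V.σ2 ∘L V.C q) * V.Xi q)) ∘L V.B q
            + V.Xi q ∘L (-(V.A ∘L (V.B q ∘L m2c V.σ2)) - V.B q ∘L m2c V.γ))) q.1 :=
    hCs.clm_compC (hXis.clm_compC hBs)
  have e : (m2c V.γ ∘L V.C q - m2c V.σ2 ∘L (V.C q ∘L V.Aζ)) ∘L (V.Xi q ∘L V.B q)
        + V.C q ∘L ((-(V.Xi q * (V.B q ∘L m2c V.σ2 ∘L V.C q) * V.Xi q)) ∘L V.B q
            + V.Xi q ∘L (-(V.A ∘L (V.B q ∘L m2c V.σ2)) - V.B q ∘L m2c V.γ))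
      = m2c V.σ2 ∘L (V.C q ∘L V.Xi q ∘L V.A ∘L V.B q)
        - (V.C q ∘L V.Xi q ∘L V.A ∘L V.B q) ∘L m2c V.σ2
        + (m2c V.γ ∘L (V.C q ∘L V.Xi q ∘L V.B q)
            - (V.C q ∘L V.Xi q ∘L V.B q) ∘L m2c V.γ)
        + (m2c V.σ2 ∘L (V.C q ∘L V.Xi q ∘L V.B q)
            - (V.C q ∘L V.Xi q ∘L V.B q) ∘L m2c V.σ2)
            ∘L (V.C q ∘L V.Xi q ∘L V.B q) := by
    refine ContinuousLinearMap.ext fun v => ?_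
    simp only [ContinuousLinearMap.comp_apply, ContinuousLinearMap.add_apply,
      ContinuousLinearMap.sub_apply, ContinuousLinearMap.neg_apply,
      ContinuousLinearMap.mul_apply, ContinuousLinearMap.zero_apply,
      map_add, map_sub, map_neg, vaz V hσ1 hq]
    abel
  rwa [e] at hraw

set_option maxHeartbeats 2000000 in
/-- Space derivative of the first-moment composite, in closed form. -/
private lemma vHx1 (V : Vessel K 2) (hσ1 : V.σ1 = 1) {q : ℝ × ℝ} (hq : q ∈ V.Ω) :
    HasDerivAt (fun x => V.C (x, q.2) ∘L V.Xi (x, q.2) ∘L V.A ∘L V.B (x, q.2))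
      (m2c V.σ2 ∘L (V.C q ∘L V.Xi q ∘L V.A ∘L V.A ∘L V.B q)
        - (V.C q ∘L V.Xi q ∘L V.A ∘L V.A ∘L V.B q) ∘L m2c V.σ2
        + (m2c V.γ ∘L (V.C q ∘L V.Xi q ∘L V.A ∘L V.B q)
            - (V.C q ∘L V.Xi q ∘L V.A ∘L V.B q) ∘L m2c V.γ)
        + (m2c V.σ2 ∘L (V.C q ∘L V.Xi q ∘L V.B q)
            - (V.C q ∘L V.Xi q ∘L V.B q) ∘L m2c V.σ2)
            ∘L (V.C q ∘L V.Xi q ∘L V.A ∘L V.B q)) q.1 := by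
  have hBs : HasDerivAt (fun x => V.B (x, q.2)) (pdx V.B q) q.1 :=
    slicex V.hΩ one_le_two V.smoothB hq
  have hCs : HasDerivAt (fun x => V.C (x, q.2)) (pdx V.C q) q.1 :=
    slicex V.hΩ one_le_two V.smoothC hq
  have hXis := vXix V hq
  rw [V.eqXx q hq] at hXis
  rw [vpdxC V hσ1 hq] at hCs
  rw [vpdxB V hσ1 hq] at hBs
  have hraw : HasDerivAt (fun x => V.C (x, q.2) ∘L V.Xi (x, q.2) ∘L V.A ∘L V.B (x, q.2))
      ((m2c V.γ ∘L V.C q - m2c V.σ2 ∘L (V.C q ∘L V.Aζ)) ∘L (V.Xi q ∘L V.A ∘L V.B q)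
        + V.C q ∘L ((-(V.Xi q * (V.B q ∘L m2c V.σ2 ∘L V.C q) * V.Xi q)) ∘L (V.A ∘L V.B q)
            + V.Xi q ∘L ((0 : K →L[ℂ] K) ∘L V.B q
                + V.A ∘L (-(V.A ∘L (V.B q ∘L m2c V.σ2)) - V.B q ∘L m2c V.γ)))) q.1 :=
    hCs.clm_compC (hXis.clm_compC ((hasDerivAt_const q.1 V.A).clm_compC hBs))
  have e : (m2c V.γ ∘L V.C q - m2c V.σ2 ∘L (V.C q ∘L V.Aζ)) ∘L (V.Xi q ∘L V.A ∘L V.B q)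
        + V.C q ∘L ((-(V.Xi q * (V.B q ∘L m2c V.σ2 ∘L V.C q) * V.Xi q)) ∘L (V.A ∘L V.B q)
            + V.Xi q ∘L ((0 : K →L[ℂ] K) ∘L V.B q
                + V.A ∘L (-(V.A ∘L (V.B q ∘L m2c V.σ2)) - V.B q ∘L m2c V.γ)))
      = m2c V.σ2 ∘L (V.C q ∘L V.Xi q ∘L V.A ∘L V.A ∘L V.B q)
        - (V.C q ∘L V.Xi q ∘L V.A ∘L V.A ∘L V.B q) ∘L m2c V.σ2
        + (m2c V.γ ∘L (V.C q ∘L V.Xi q ∘L V.A ∘L V.B q)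
            - (V.C q ∘L V.Xi q ∘L V.A ∘L V.B q) ∘L m2c V.γ)
        + (m2c V.σ2 ∘L (V.C q ∘L V.Xi q ∘L V.B q)
            - (V.C q ∘L V.Xi q ∘L V.B q) ∘L m2c V.σ2)
            ∘L (V.C q ∘L V.Xi q ∘L V.A ∘L V.B q) := by
    refine ContinuousLinearMap.ext fun v => ?_
    simp only [ContinuousLinearMap.comp_apply, ContinuousLinearMap.add_apply,
      ContinuousLinearMap.sub_apply, ContinuousLinearMap.neg_apply,
      ContinuousLinearMap.mul_apply, ContinuousLinearMap.zero_apply,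
      map_add, map_sub, map_neg, map_zero, vaz V hσ1 hq]
    abel
  rwa [e] at hraw

set_option maxHeartbeats 2000000 in
/-- Time derivative of the zeroth-moment composite, in closed form. -/
private lemma vHt0 (V : Vessel K 2) (hσ1 : V.σ1 = 1) {q : ℝ × ℝ} (hq : q ∈ V.Ω) :
    HasDerivAt (fun t => V.C (q.1, t) ∘L V.Xi (q.1, t) ∘L V.B (q.1, t))
      (Complex.I • (m2c V.σ2 ∘L (V.C q ∘L V.Xi q ∘L V.A ∘L V.A ∘L V.B q)
          - (V.C q ∘L V.Xi q ∘L V.A ∘L V.A ∘L V.B q) ∘L m2c V.σ2)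
        + Complex.I • ((m2c V.γ + (m2c V.σ2 ∘L (V.C q ∘L V.Xi q ∘L V.B q)
              - (V.C q ∘L V.Xi q ∘L V.B q) ∘L m2c V.σ2))
              ∘L (V.C q ∘L V.Xi q ∘L V.A ∘L V.B q)
            - (V.C q ∘L V.Xi q ∘L V.A ∘L V.B q) ∘L m2c V.γ)
        + Complex.I • ((m2c V.σ2 ∘L (V.C q ∘L V.Xi q ∘L V.A ∘L V.B q)
            - (V.C q ∘L V.Xi q ∘L V.A ∘L V.B q) ∘L m2c V.σ2
            + (m2c V.γ ∘L (V.C q ∘L V.Xi q ∘L V.B q)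
                - (V.C q ∘L V.Xi q ∘L V.B q) ∘L m2c V.γ)
            + (m2c V.σ2 ∘L (V.C q ∘L V.Xi q ∘L V.B q)
                - (V.C q ∘L V.Xi q ∘L V.B q) ∘L m2c V.σ2)
                ∘L (V.C q ∘L V.Xi q ∘L V.B q))
            ∘L (V.C q ∘L V.Xi q ∘L V.B q))) q.2 := by
  have hBt : HasDerivAt (fun t => V.B (q.1, t)) (pdt V.B q) q.2 :=
    slicet V.hΩ one_le_two V.smoothB hq
  have hCt : HasDerivAt (fun t => V.C (q.1, t)) (pdt V.C q) q.2 :=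
    slicet V.hΩ one_le_two V.smoothC hq
  have hXit := vXit V hq
  rw [V.eqXt q hq] at hXit
  rw [V.eqCt q hq, vpdxC V hσ1 hq] at hCt
  rw [V.eqBt q hq, vpdxB V hσ1 hq] at hBt
  have hraw : HasDerivAt (fun t => V.C (q.1, t) ∘L V.Xi (q.1, t) ∘L V.B (q.1, t))
      (((-Complex.I) • ((m2c V.γ ∘L V.C q - m2c V.σ2 ∘L (V.C q ∘L V.Aζ)) ∘L V.Aζ))
          ∘L (V.Xi q ∘L V.B q)
        + V.C q ∘L ((-(V.Xi q * (Complex.I • (V.A ∘L V.B q ∘L m2c V.σ2 ∘L V.C q)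
              - Complex.I • (V.B q ∘L m2c V.σ2 ∘L V.C q ∘L V.Aζ)
              + Complex.I • (V.B q ∘L m2c V.γ ∘L V.C q)) * V.Xi q)) ∘L V.B q
            + V.Xi q ∘L (Complex.I •
                (V.A ∘L (-(V.A ∘L (V.B q ∘L m2c V.σ2)) - V.B q ∘L m2c V.γ))))) q.2 :=
    hCt.clm_compC (hXit.clm_compC hBt)
  have e : ((-Complex.I) • ((m2c V.γ ∘L V.C q - m2c V.σ2 ∘L (V.C q ∘L V.Aζ)) ∘L V.Aζ))
          ∘L (V.Xi q ∘L V.B q)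
        + V.C q ∘L ((-(V.Xi q * (Complex.I • (V.A ∘L V.B q ∘L m2c V.σ2 ∘L V.C q)
              - Complex.I • (V.B q ∘L m2c V.σ2 ∘L V.C q ∘L V.Aζ)
              + Complex.I • (V.B q ∘L m2c V.γ ∘L V.C q)) * V.Xi q)) ∘L V.B q
            + V.Xi q ∘L (Complex.I •
                (V.A ∘L (-(V.A ∘L (V.B q ∘L m2c V.σ2)) - V.B q ∘L m2c V.γ))))
      = Complex.I • (m2c V.σ2 ∘L (V.C q ∘L V.Xi q ∘L V.A ∘L V.A ∘L V.B q)
          - (V.C q ∘L V.Xi q ∘L V.A ∘L V.A ∘L V.B q) ∘L m2c V.σ2)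
        + Complex.I • ((m2c V.γ + (m2c V.σ2 ∘L (V.C q ∘L V.Xi q ∘L V.B q)
              - (V.C q ∘L V.Xi q ∘L V.B q) ∘L m2c V.σ2))
              ∘L (V.C q ∘L V.Xi q ∘L V.A ∘L V.B q)
            - (V.C q ∘L V.Xi q ∘L V.A ∘L V.B q) ∘L m2c V.γ)
        + Complex.I • ((m2c V.σ2 ∘L (V.C q ∘L V.Xi q ∘L V.A ∘L V.B q)
            - (V.C q ∘L V.Xi q ∘L V.A ∘L V.B q) ∘L m2c V.σ2
            + (m2c V.γ ∘L (V.C q ∘L V.Xi q ∘L V.B q)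
                - (V.C q ∘L V.Xi q ∘L V.B q) ∘L m2c V.γ)
            + (m2c V.σ2 ∘L (V.C q ∘L V.Xi q ∘L V.B q)
                - (V.C q ∘L V.Xi q ∘L V.B q) ∘L m2c V.σ2)
                ∘L (V.C q ∘L V.Xi q ∘L V.B q))
            ∘L (V.C q ∘L V.Xi q ∘L V.B q)) := by
    refine ContinuousLinearMap.ext fun v => ?_
    simp only [ContinuousLinearMap.comp_apply, ContinuousLinearMap.add_apply,
      ContinuousLinearMap.sub_apply, ContinuousLinearMap.neg_apply,
      ContinuousLinearMap.smul_apply, ContinuousLinearMap.mul_apply,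
      ContinuousLinearMap.zero_apply, map_add, map_sub, map_neg, map_smul, map_zero,
      vaz V hσ1 hq]
    module
  rwa [e] at hraw


private lemma vH0f (V : Vessel K 2) (r : ℝ × ℝ) :
    V.H 0 r = c2m (V.C r ∘L V.Xi r ∘L V.B r) := by
  unfold Vessel.H
  rw [show ((V.A ^ 0) ∘L V.B r) = V.B r by
    rw [pow_zero, ContinuousLinearMap.one_def, ContinuousLinearMap.id_comp]]

private lemma vH1f (V : Vessel K 2) (r : ℝ × ℝ) :
    V.H 1 r = c2m (V.C r ∘L V.Xi r ∘L V.A ∘L V.B r) := by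
  unfold Vessel.H
  rw [pow_one]

section KdVEntries

variable {V : Vessel K 2} {γ11 γ12 γ21 : ℂ}

local notation "HYPS" => Unit

set_option maxHeartbeats 1000000 in
private lemma keyA (hσ1 : V.σ1 = 1) (hσ2 : V.σ2 = !![0, 0; 1, 0])
    (hγ : V.γ = !![γ11, γ12; γ21, -γ11])
    (hnorm : ∀ r ∈ V.Ω, V.H 0 r 0 0 + V.H 0 r 1 1 = 0)
    {q : ℝ × ℝ} (hq : q ∈ V.Ω) :
    HasDerivAt (fun x => V.H 0 (x, q.2) 0 0)
      (-V.H 1 q 0 1 + γ12 * V.H 0 q 1 0 - γ21 * V.H 0 q 0 1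
        - V.H 0 q 0 0 * V.H 0 q 0 1) q.1 := by
  have h := hasDerivAt_ent (vHx0 V hσ1 hq) 0 0
  have hval : c2m (m2c V.σ2 ∘L (V.C q ∘L V.Xi q ∘L V.A ∘L V.B q)
        - (V.C q ∘L V.Xi q ∘L V.A ∘L V.B q) ∘L m2c V.σ2
        + (m2c V.γ ∘L (V.C q ∘L V.Xi q ∘L V.B q)
            - (V.C q ∘L V.Xi q ∘L V.B q) ∘L m2c V.γ)
        + (m2c V.σ2 ∘L (V.C q ∘L V.Xi q ∘L V.B q)
            - (V.C q ∘L V.Xi q ∘L V.B q) ∘L m2c V.σ2)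
            ∘L (V.C q ∘L V.Xi q ∘L V.B q)) 0 0
      = -V.H 1 q 0 1 + γ12 * V.H 0 q 1 0 - γ21 * V.H 0 q 0 1
        - V.H 0 q 0 0 * V.H 0 q 0 1 := by
    simp only [c2m_sub, c2m_add, c2m_comp, c2m_m2c, ← vH0f, ← vH1f, hσ2, hγ]
    simp only [Matrix.sub_apply, Matrix.add_apply, Matrix.neg_apply, Matrix.smul_apply,
      smul_eq_mul, Matrix.mul_apply, Fin.sum_univ_two, Matrix.cons_val', Matrix.cons_val_zero,
      Matrix.cons_val_one, Matrix.head_cons, Matrix.head_fin_const, Matrix.empty_val',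
      Matrix.cons_val_fin_one, neg_neg, Matrix.of_apply]
    ring
  rw [hval] at h
  simp only [← vH0f] at h
  exact h

set_option maxHeartbeats 1000000 in
private lemma keyB (hσ1 : V.σ1 = 1) (hσ2 : V.σ2 = !![0, 0; 1, 0])
    (hγ : V.γ = !![γ11, γ12; γ21, -γ11])
    (hnorm : ∀ r ∈ V.Ω, V.H 0 r 0 0 + V.H 0 r 1 1 = 0)
    {q : ℝ × ℝ} (hq : q ∈ V.Ω) :
    HasDerivAt (fun x => V.H 0 (x, q.2) 0 1)
      (2 * γ11 * V.H 0 q 0 1 - 2 * γ12 * V.H 0 q 0 0 - V.H 0 q 0 1 ^ 2) q.1 := by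
  have h := hasDerivAt_ent (vHx0 V hσ1 hq) 0 1
  have hd : V.H 0 q 1 1 = -V.H 0 q 0 0 := by linear_combination hnorm q hq
  have hval : c2m (m2c V.σ2 ∘L (V.C q ∘L V.Xi q ∘L V.A ∘L V.B q)
        - (V.C q ∘L V.Xi q ∘L V.A ∘L V.B q) ∘L m2c V.σ2
        + (m2c V.γ ∘L (V.C q ∘L V.Xi q ∘L V.B q)
            - (V.C q ∘L V.Xi q ∘L V.B q) ∘L m2c V.γ)
        + (m2c V.σ2 ∘L (V.C q ∘L V.Xi q ∘L V.B q)
            - (V.C q ∘L V.Xi q ∘L V.B q) ∘L m2c V.σ2)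
            ∘L (V.C q ∘L V.Xi q ∘L V.B q)) 0 1
      = 2 * γ11 * V.H 0 q 0 1 - 2 * γ12 * V.H 0 q 0 0 - V.H 0 q 0 1 ^ 2 := by
    simp only [c2m_sub, c2m_add, c2m_comp, c2m_m2c, ← vH0f, ← vH1f, hσ2, hγ]
    simp only [Matrix.sub_apply, Matrix.add_apply, Matrix.neg_apply, Matrix.smul_apply,
      smul_eq_mul, Matrix.mul_apply, Fin.sum_univ_two, Matrix.cons_val', Matrix.cons_val_zero,
      Matrix.cons_val_one, Matrix.head_cons, Matrix.head_fin_const, Matrix.empty_val',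
      Matrix.cons_val_fin_one, neg_neg, Matrix.of_apply]
    rw [hd]
    ring
  rw [hval] at h
  simp only [← vH0f] at h
  exact h

set_option maxHeartbeats 1000000 in
private lemma keyC (hσ1 : V.σ1 = 1) (hσ2 : V.σ2 = !![0, 0; 1, 0])
    (hγ : V.γ = !![γ11, γ12; γ21, -γ11])
    (hnorm : ∀ r ∈ V.Ω, V.H 0 r 0 0 + V.H 0 r 1 1 = 0)
    {q : ℝ × ℝ} (hq : q ∈ V.Ω) :
    HasDerivAt (fun x => V.H 0 (x, q.2) 1 0)
      (V.H 1 q 0 0 - V.H 1 q 1 1 + 2 * γ21 * V.H 0 q 0 0 - 2 * γ11 * V.H 0 q 1 0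
        + 2 * V.H 0 q 0 0 ^ 2 + V.H 0 q 0 1 * V.H 0 q 1 0) q.1 := by
  have h := hasDerivAt_ent (vHx0 V hσ1 hq) 1 0
  have hd : V.H 0 q 1 1 = -V.H 0 q 0 0 := by linear_combination hnorm q hq
  have hval : c2m (m2c V.σ2 ∘L (V.C q ∘L V.Xi q ∘L V.A ∘L V.B q)
        - (V.C q ∘L V.Xi q ∘L V.A ∘L V.B q) ∘L m2c V.σ2
        + (m2c V.γ ∘L (V.C q ∘L V.Xi q ∘L V.B q)
            - (V.C q ∘L V.Xi q ∘L V.B q) ∘L m2c V.γ)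
        + (m2c V.σ2 ∘L (V.C q ∘L V.Xi q ∘L V.B q)
            - (V.C q ∘L V.Xi q ∘L V.B q) ∘L m2c V.σ2)
            ∘L (V.C q ∘L V.Xi q ∘L V.B q)) 1 0
      = V.H 1 q 0 0 - V.H 1 q 1 1 + 2 * γ21 * V.H 0 q 0 0 - 2 * γ11 * V.H 0 q 1 0
        + 2 * V.H 0 q 0 0 ^ 2 + V.H 0 q 0 1 * V.H 0 q 1 0 := by
    simp only [c2m_sub, c2m_add, c2m_comp, c2m_m2c, ← vH0f, ← vH1f, hσ2, hγ]
    simp only [Matrix.sub_apply, Matrix.add_apply, Matrix.neg_apply, Matrix.smul_apply,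
      smul_eq_mul, Matrix.mul_apply, Fin.sum_univ_two, Matrix.cons_val', Matrix.cons_val_zero,
      Matrix.cons_val_one, Matrix.head_cons, Matrix.head_fin_const, Matrix.empty_val',
      Matrix.cons_val_fin_one, neg_neg, Matrix.of_apply]
    rw [hd]
    ring
  rw [hval] at h
  simp only [← vH0f] at h
  exact h

set_option maxHeartbeats 1000000 in
private lemma keyQ (hσ1 : V.σ1 = 1) (hσ2 : V.σ2 = !![0, 0; 1, 0])
    (hγ : V.γ = !![γ11, γ12; γ21, -γ11])
    (hnorm : ∀ r ∈ V.Ω, V.H 0 r 0 0 + V.H 0 r 1 1 = 0)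
    {q : ℝ × ℝ} (hq : q ∈ V.Ω) :
    HasDerivAt (fun x => V.H 1 (x, q.2) 0 1)
      (2 * γ11 * V.H 1 q 0 1 - γ12 * (V.H 1 q 0 0 - V.H 1 q 1 1)
        - V.H 0 q 0 1 * V.H 1 q 0 1) q.1 := by
  have h := hasDerivAt_ent (vHx1 V hσ1 hq) 0 1
  have hval : c2m (m2c V.σ2 ∘L (V.C q ∘L V.Xi q ∘L V.A ∘L V.A ∘L V.B q)
        - (V.C q ∘L V.Xi q ∘L V.A ∘L V.A ∘L V.B q) ∘L m2c V.σ2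
        + (m2c V.γ ∘L (V.C q ∘L V.Xi q ∘L V.A ∘L V.B q)
            - (V.C q ∘L V.Xi q ∘L V.A ∘L V.B q) ∘L m2c V.γ)
        + (m2c V.σ2 ∘L (V.C q ∘L V.Xi q ∘L V.B q)
            - (V.C q ∘L V.Xi q ∘L V.B q) ∘L m2c V.σ2)
            ∘L (V.C q ∘L V.Xi q ∘L V.A ∘L V.B q)) 0 1
      = 2 * γ11 * V.H 1 q 0 1 - γ12 * (V.H 1 q 0 0 - V.H 1 q 1 1)
        - V.H 0 q 0 1 * V.H 1 q 0 1 := by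
    simp only [c2m_sub, c2m_add, c2m_comp, c2m_m2c, ← vH0f, ← vH1f, hσ2, hγ]
    simp only [Matrix.sub_apply, Matrix.add_apply, Matrix.neg_apply, Matrix.smul_apply,
      smul_eq_mul, Matrix.mul_apply, Fin.sum_univ_two, Matrix.cons_val', Matrix.cons_val_zero,
      Matrix.cons_val_one, Matrix.head_cons, Matrix.head_fin_const, Matrix.empty_val',
      Matrix.cons_val_fin_one, neg_neg, Matrix.of_apply]
    ring
  rw [hval] at h
  simp only [← vH0f, ← vH1f] at h
  exact h

set_option maxHeartbeats 1000000 in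
private lemma keyT (hσ1 : V.σ1 = 1) (hσ2 : V.σ2 = !![0, 0; 1, 0])
    (hγ : V.γ = !![γ11, γ12; γ21, -γ11])
    (hnorm : ∀ r ∈ V.Ω, V.H 0 r 0 0 + V.H 0 r 1 1 = 0)
    {q : ℝ × ℝ} (hq : q ∈ V.Ω) :
    HasDerivAt (fun t => V.H 0 (q.1, t) 0 1)
      (Complex.I * (2 * γ11 * V.H 1 q 0 1 - V.H 0 q 0 1 * V.H 1 q 0 1
        - γ12 * (V.H 1 q 0 0 - V.H 1 q 1 1)
        + V.H 0 q 0 1 * (-V.H 1 q 0 1 + γ12 * V.H 0 q 1 0 - γ21 * V.H 0 q 0 1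
            - V.H 0 q 0 0 * V.H 0 q 0 1)
        - V.H 0 q 0 0 * (2 * γ11 * V.H 0 q 0 1 - 2 * γ12 * V.H 0 q 0 0
            - V.H 0 q 0 1 ^ 2))) q.2 := by
  have h := hasDerivAt_ent (vHt0 V hσ1 hq) 0 1
  have hd : V.H 0 q 1 1 = -V.H 0 q 0 0 := by linear_combination hnorm q hq
  have hval : c2m (Complex.I • (m2c V.σ2 ∘L (V.C q ∘L V.Xi q ∘L V.A ∘L V.A ∘L V.B q)
          - (V.C q ∘L V.Xi q ∘L V.A ∘L V.A ∘L V.B q) ∘L m2c V.σ2)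
        + Complex.I • ((m2c V.γ + (m2c V.σ2 ∘L (V.C q ∘L V.Xi q ∘L V.B q)
              - (V.C q ∘L V.Xi q ∘L V.B q) ∘L m2c V.σ2))
              ∘L (V.C q ∘L V.Xi q ∘L V.A ∘L V.B q)
            - (V.C q ∘L V.Xi q ∘L V.A ∘L V.B q) ∘L m2c V.γ)
        + Complex.I • ((m2c V.σ2 ∘L (V.C q ∘L V.Xi q ∘L V.A ∘L V.B q)
            - (V.C q ∘L V.Xi q ∘L V.A ∘L V.B q) ∘L m2c V.σ2
            + (m2c V.γ ∘L (V.C q ∘L V.Xi q ∘L V.B q)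
                - (V.C q ∘L V.Xi q ∘L V.B q) ∘L m2c V.γ)
            + (m2c V.σ2 ∘L (V.C q ∘L V.Xi q ∘L V.B q)
                - (V.C q ∘L V.Xi q ∘L V.B q) ∘L m2c V.σ2)
                ∘L (V.C q ∘L V.Xi q ∘L V.B q))
            ∘L (V.C q ∘L V.Xi q ∘L V.B q))) 0 1
      = Complex.I * (2 * γ11 * V.H 1 q 0 1 - V.H 0 q 0 1 * V.H 1 q 0 1
        - γ12 * (V.H 1 q 0 0 - V.H 1 q 1 1)
        + V.H 0 q 0 1 * (-V.H 1 q 0 1 + γ12 * V.H 0 q 1 0 - γ21 * V.H 0 q 0 1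
            - V.H 0 q 0 0 * V.H 0 q 0 1)
        - V.H 0 q 0 0 * (2 * γ11 * V.H 0 q 0 1 - 2 * γ12 * V.H 0 q 0 0
            - V.H 0 q 0 1 ^ 2)) := by
    simp only [c2m_sub, c2m_add, c2m_smul, c2m_comp, c2m_m2c, ← vH0f, ← vH1f, hσ2, hγ]
    simp only [Matrix.sub_apply, Matrix.add_apply, Matrix.neg_apply, Matrix.smul_apply,
      smul_eq_mul, Matrix.mul_apply, Fin.sum_univ_two, Matrix.cons_val', Matrix.cons_val_zero,
      Matrix.cons_val_one, Matrix.head_cons, Matrix.head_fin_const, Matrix.empty_val',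
      Matrix.cons_val_fin_one, neg_neg, Matrix.of_apply]
    rw [hd]
    ring
  rw [hval] at h
  simp only [← vH0f] at h
  exact h

end KdVEntries

set_option maxHeartbeats 1000000 in
private lemma scalarKdV (Ω : Set (ℝ × ℝ)) (hΩ : IsOpen Ω) (γ11 γ12 γ21 : ℂ)
    (a b c qf pf sf : ℝ × ℝ → ℂ)
    (hA : ∀ q ∈ Ω, HasDerivAt (fun x => a (x, q.2))
      (-qf q + γ12 * c q - γ21 * b q - a q * b q) q.1)
    (hB : ∀ q ∈ Ω, HasDerivAt (fun x => b (x, q.2))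
      (2 * γ11 * b q - 2 * γ12 * a q - b q ^ 2) q.1)
    (hC : ∀ q ∈ Ω, HasDerivAt (fun x => c (x, q.2))
      (pf q - sf q + 2 * γ21 * a q - 2 * γ11 * c q + 2 * a q ^ 2 + b q * c q) q.1)
    (hQ : ∀ q ∈ Ω, HasDerivAt (fun x => qf (x, q.2))
      (2 * γ11 * qf q - γ12 * (pf q - sf q) - b q * qf q) q.1)
    (hT : ∀ q ∈ Ω, HasDerivAt (fun t => b (q.1, t))
      (Complex.I * (2 * γ11 * qf q - b q * qf q - γ12 * (pf q - sf q)
        + b q * (-qf q + γ12 * c q - γ21 * b q - a q * b q)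
        - a q * (2 * γ11 * b q - 2 * γ12 * a q - b q ^ 2))) q.2)
    {p : ℝ × ℝ} (hp : p ∈ Ω) :
    4 * Complex.I * γ12 * pdt b p =
      4 * (γ11 ^ 2 + γ12 * γ21) * pdx b p - 6 * pdx b p ^ 2 -
        pdx (pdx (pdx b)) p := by
  have hmem : ∀ q ∈ Ω, ∀ᶠ x in nhds q.1, (x, q.2) ∈ Ω := by
    intro q hq
    have hc : Continuous (fun x : ℝ => (x, q.2)) := continuous_id.prodMk continuous_const
    have hU : Ω ∈ nhds (q.1, q.2) := hΩ.mem_nhds (by rwa [Prod.mk.eta])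
    exact Filter.eventually_of_mem (hc.continuousAt.preimage_mem_nhds hU) fun x hx => hx
  have e1 : ∀ q ∈ Ω, pdx b q = 2 * γ11 * b q - 2 * γ12 * a q - b q ^ 2 :=
    fun q hq => (hB q hq).deriv
  have hB2 : ∀ q ∈ Ω, HasDerivAt
      (fun x => 2 * γ11 * b (x, q.2) - 2 * γ12 * a (x, q.2) - b (x, q.2) ^ 2)
      (2 * γ11 * (2 * γ11 * b q - 2 * γ12 * a q - b q ^ 2)
        - 2 * γ12 * (-qf q + γ12 * c q - γ21 * b q - a q * b q)
        - 2 * b q * (2 * γ11 * b q - 2 * γ12 * a q - b q ^ 2)) q.1 := by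
    intro q hq
    have h1 := hA q hq
    have h2 := hB q hq
    have hsq : HasDerivAt (fun x => b (x, q.2) ^ 2)
        ((2 * γ11 * b q - 2 * γ12 * a q - b q ^ 2) * b q
          + b q * (2 * γ11 * b q - 2 * γ12 * a q - b q ^ 2)) q.1 := by
      simpa [pow_two, Pi.mul_def] using h2.mul h2
    have h3 := (((h2.const_mul (2 * γ11)).sub (h1.const_mul (2 * γ12))).sub hsq)
    convert h3 using 1
    · rfl
    · rfl
    ring
  have e2 : ∀ q ∈ Ω, pdx (pdx b) q =
      2 * γ11 * (2 * γ11 * b q - 2 * γ12 * a q - b q ^ 2)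
        - 2 * γ12 * (-qf q + γ12 * c q - γ21 * b q - a q * b q)
        - 2 * b q * (2 * γ11 * b q - 2 * γ12 * a q - b q ^ 2) := by
    intro q hq
    have hev : (fun x => pdx b (x, q.2)) =ᶠ[nhds q.1]
        (fun x => 2 * γ11 * b (x, q.2) - 2 * γ12 * a (x, q.2) - b (x, q.2) ^ 2) := by
      filter_upwards [hmem q hq] with x hx
      exact e1 (x, q.2) hx
    exact ((hB2 q hq).congr_of_eventuallyEq hev).deriv
  have hA2 : ∀ q ∈ Ω, HasDerivAt
      (fun x => -qf (x, q.2) + γ12 * c (x, q.2) - γ21 * b (x, q.2) - a (x, q.2) * b (x, q.2))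
      (-(2 * γ11 * qf q - γ12 * (pf q - sf q) - b q * qf q)
        + γ12 * (pf q - sf q + 2 * γ21 * a q - 2 * γ11 * c q + 2 * a q ^ 2 + b q * c q)
        - γ21 * (2 * γ11 * b q - 2 * γ12 * a q - b q ^ 2)
        - ((-qf q + γ12 * c q - γ21 * b q - a q * b q) * b q
            + a q * (2 * γ11 * b q - 2 * γ12 * a q - b q ^ 2))) q.1 := by
    intro q hq
    exact ((((hQ q hq).neg).add ((hC q hq).const_mul γ12)).sub
      ((hB q hq).const_mul γ21)).sub ((hA q hq).mul (hB q hq))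
  have hB3 : ∀ q ∈ Ω, HasDerivAt
      (fun x => 2 * γ11 * (2 * γ11 * b (x, q.2) - 2 * γ12 * a (x, q.2) - b (x, q.2) ^ 2)
        - 2 * γ12 * (-qf (x, q.2) + γ12 * c (x, q.2) - γ21 * b (x, q.2)
            - a (x, q.2) * b (x, q.2))
        - 2 * b (x, q.2) * (2 * γ11 * b (x, q.2) - 2 * γ12 * a (x, q.2) - b (x, q.2) ^ 2))
      (2 * γ11 * (2 * γ11 * (2 * γ11 * b q - 2 * γ12 * a q - b q ^ 2)
            - 2 * γ12 * (-qf q + γ12 * c q - γ21 * b q - a q * b q)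
            - 2 * b q * (2 * γ11 * b q - 2 * γ12 * a q - b q ^ 2))
        - 2 * γ12 * (-(2 * γ11 * qf q - γ12 * (pf q - sf q) - b q * qf q)
            + γ12 * (pf q - sf q + 2 * γ21 * a q - 2 * γ11 * c q + 2 * a q ^ 2 + b q * c q)
            - γ21 * (2 * γ11 * b q - 2 * γ12 * a q - b q ^ 2)
            - ((-qf q + γ12 * c q - γ21 * b q - a q * b q) * b q
                + a q * (2 * γ11 * b q - 2 * γ12 * a q - b q ^ 2)))
        - (2 * (2 * γ11 * b q - 2 * γ12 * a q - b q ^ 2)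
              * (2 * γ11 * b q - 2 * γ12 * a q - b q ^ 2)
            + 2 * b q * (2 * γ11 * (2 * γ11 * b q - 2 * γ12 * a q - b q ^ 2)
                - 2 * γ12 * (-qf q + γ12 * c q - γ21 * b q - a q * b q)
                - 2 * b q * (2 * γ11 * b q - 2 * γ12 * a q - b q ^ 2)))) q.1 := by
    intro q hq
    exact (((hB2 q hq).const_mul (2 * γ11)).sub ((hA2 q hq).const_mul (2 * γ12))).sub
      (((hB q hq).const_mul 2).mul (hB2 q hq))
  have e3 : pdx (pdx (pdx b)) p =
      2 * γ11 * (2 * γ11 * (2 * γ11 * b p - 2 * γ12 * a p - b p ^ 2)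
            - 2 * γ12 * (-qf p + γ12 * c p - γ21 * b p - a p * b p)
            - 2 * b p * (2 * γ11 * b p - 2 * γ12 * a p - b p ^ 2))
        - 2 * γ12 * (-(2 * γ11 * qf p - γ12 * (pf p - sf p) - b p * qf p)
            + γ12 * (pf p - sf p + 2 * γ21 * a p - 2 * γ11 * c p + 2 * a p ^ 2 + b p * c p)
            - γ21 * (2 * γ11 * b p - 2 * γ12 * a p - b p ^ 2)
            - ((-qf p + γ12 * c p - γ21 * b p - a p * b p) * b p
                + a p * (2 * γ11 * b p - 2 * γ12 * a p - b p ^ 2)))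
        - (2 * (2 * γ11 * b p - 2 * γ12 * a p - b p ^ 2)
              * (2 * γ11 * b p - 2 * γ12 * a p - b p ^ 2)
            + 2 * b p * (2 * γ11 * (2 * γ11 * b p - 2 * γ12 * a p - b p ^ 2)
                - 2 * γ12 * (-qf p + γ12 * c p - γ21 * b p - a p * b p)
                - 2 * b p * (2 * γ11 * b p - 2 * γ12 * a p - b p ^ 2))) := by
    have hev : (fun x => pdx (pdx b) (x, p.2)) =ᶠ[nhds p.1]
        (fun x => 2 * γ11 * (2 * γ11 * b (x, p.2) - 2 * γ12 * a (x, p.2) - b (x, p.2) ^ 2)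
          - 2 * γ12 * (-qf (x, p.2) + γ12 * c (x, p.2) - γ21 * b (x, p.2)
              - a (x, p.2) * b (x, p.2))
          - 2 * b (x, p.2) * (2 * γ11 * b (x, p.2) - 2 * γ12 * a (x, p.2)
              - b (x, p.2) ^ 2)) := by
      filter_upwards [hmem p hp] with x hx
      exact e2 (x, p.2) hx
    exact ((hB3 p hp).congr_of_eventuallyEq hev).deriv
  have e4 : pdt b p = Complex.I * (2 * γ11 * qf p - b p * qf p - γ12 * (pf p - sf p)
      + b p * (-qf p + γ12 * c p - γ21 * b p - a p * b p)
      - a p * (2 * γ11 * b p - 2 * γ12 * a p - b p ^ 2)) := (hT p hp).deriv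
  rw [e4, e3, e1 p hp]
  ring_nf
  simp only [Complex.I_sq]
  ring

end KdVCore



/-- the `(1,2)` entry of the first moment of a vessel with generalized
KdV parameters satisfies the generalized KdV equation. -/
theorem generalized_KdV_equation {K : Type*} [NormedAddCommGroup K]
    [InnerProductSpace ℂ K] [CompleteSpace K]
    (V : Vessel K 2) (γ11 γ12 γ21 : ℂ) (hγ12 : γ12 ≠ 0)
    (hσ1 : V.σ1 = 1) (hσ2 : V.σ2 = !![0, 0; 1, 0])
    (hγ : V.γ = !![γ11, γ12; γ21, -γ11])
    (hsmB : ContDiffOn ℝ 4 V.B V.Ω) (hsmC : ContDiffOn ℝ 4 V.C V.Ω)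
    (hsmX : ContDiffOn ℝ 4 V.X V.Ω)
    (hnorm : ∀ q ∈ V.Ω, V.H 0 q 0 0 + V.H 0 q 1 1 = 0)
    (h12 : ℝ × ℝ → ℂ) (hh12 : h12 = fun q => V.H 0 q 0 1) :
    ∀ p ∈ V.Ω,
      4 * Complex.I * γ12 * pdt h12 p =
        4 * (γ11 ^ 2 + γ12 * γ21) * pdx h12 p - 6 * (pdx h12 p) ^ 2 -
          pdx (pdx (pdx h12)) p := by
  intro p hp
  rw [hh12]
  exact scalarKdV V.Ω V.hΩ γ11 γ12 γ21
    (fun r => V.H 0 r 0 0) (fun r => V.H 0 r 0 1) (fun r => V.H 0 r 1 0)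
    (fun r => V.H 1 r 0 1) (fun r => V.H 1 r 0 0) (fun r => V.H 1 r 1 1)
    (fun q hq => keyA hσ1 hσ2 hγ hnorm hq)
    (fun q hq => keyB hσ1 hσ2 hγ hnorm hq)
    (fun q hq => keyC hσ1 hσ2 hγ hnorm hq)
    (fun q hq => keyQ hσ1 hσ2 hγ hnorm hq)
    (fun q hq => keyT hσ1 hσ2 hγ hnorm hq)
    hp
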